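/- Let N be a nonempty finite set and let f : 2^N → ℝ ∪ {-∞} be a set function whose effective domain dom f is nonempty and consists of equi-cardinal sets (|X| = |Y| for all X, Y ∈ dom f). If the conjugate function g(p) = max{ f(X) − p(X) : X ⊆ N } is submodular on ℝ^N, then dom f is connected, i.e., for any distinct X, Y ∈ dom f there exist i ∈ X \ Y and j ∈ Y \ X such that Y + i − j ∈ dom f. -/

import Mathlib

open Finset

/-- If `dom f` is a nonempty family of equi-cardinal sets and the conjugate
`g(p) = max { f(X) - p(X) : X ⊆ N }` is submodular, then `dom f` is connected:
for any distinct `X, Y ∈ dom f` there are `i ∈ X \ Y` and `j ∈ Y \ X` with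
`Y + i - j ∈ dom f`. -/
theorem dom_connected_of_conjugate_submodular
    {N : Type*} [Fintype N] [DecidableEq N] [Nonempty N]
    (f : Finset N → WithBot ℝ) (hdom : ∃ X : Finset N, f X ≠ ⊥)
    (hequi : ∀ X Y : Finset N, f X ≠ ⊥ → f Y ≠ ⊥ → X.card = Y.card)
    (g : (N → ℝ) → ℝ)
    (hg : ∀ p : N → ℝ,
      (g p : WithBot ℝ) =
        (Finset.univ : Finset (Finset N)).sup
          (fun X => f X + ((-(∑ i ∈ X, p i) : ℝ) : WithBot ℝ)))
    (hsub : ∀ p q : N → ℝ, g (p ⊔ q) + g (p ⊓ q) ≤ g p + g q) :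
    ∀ X Y : Finset N, f X ≠ ⊥ → f Y ≠ ⊥ → X ≠ Y →
      ∃ i ∈ X \ Y, ∃ j ∈ Y \ X, f ((insert i Y).erase j) ≠ ⊥ := by
  classical
  intro X Y hX hY hXY
  set r := X.card with hr
  set B : Finset (Finset N) := Finset.univ.filter (fun Z => f Z ≠ ⊥) with hBdef
  have hmemB : ∀ Z : Finset N, Z ∈ B ↔ f Z ≠ ⊥ := by
    intro Z; simp [hBdef]
  have hXB : X ∈ B := (hmemB X).mpr hX
  have hYB : Y ∈ B := (hmemB Y).mpr hY
  have hBne : B.Nonempty := ⟨X, hXB⟩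
  have hcard : ∀ Z ∈ B, Z.card = r := by
    intro Z hZ
    exact hequi Z X ((hmemB Z).mp hZ) hX
  -- real values of f on B
  set f' : Finset N → ℝ := fun Z => WithBot.unbotD 0 (f Z) with hf'def
  have hf' : ∀ Z ∈ B, f Z = (f' Z : WithBot ℝ) := by
    intro Z hZ
    have hne := (hmemB Z).mp hZ
    obtain ⟨a, ha⟩ := WithBot.ne_bot_iff_exists.mp hne
    simp [hf'def, ← ha]
  set Fmax : ℝ := B.sup' hBne f' with hFmax
  set Fmin : ℝ := B.inf' hBne f' with hFmin
  have hFle : Fmin ≤ Fmax := le_trans (Finset.inf'_le f' hXB) (Finset.le_sup' f' hXB)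
  set M : ℝ := Fmax - Fmin + 1 with hM
  have hM0 : 0 < M := by simp [hM]; linarith
  -- the "rank" function
  set μ : Finset N → ℕ := fun S => B.sup (fun Z => (Z ∩ S).card) with hμdef
  have hμle : ∀ (S Z : Finset N), Z ∈ B → (Z ∩ S).card ≤ μ S := by
    intro S Z hZ; exact Finset.le_sup (f := fun Z => (Z ∩ S).card) hZ
  have hμex : ∀ S : Finset N, ∃ Z ∈ B, μ S = (Z ∩ S).card := by
    intro S; exact Finset.exists_mem_eq_sup B hBne _
  have hμr : ∀ S : Finset N, μ S ≤ r := by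
    intro S
    apply Finset.sup_le
    intro Z hZ
    exact le_trans (card_le_card (inter_subset_left)) (le_of_eq (hcard Z hZ))
  have hμcard : ∀ S : Finset N, μ S ≤ S.card := by
    intro S
    apply Finset.sup_le
    intro Z _
    exact card_le_card (inter_subset_right)
  have hμmono : ∀ S T : Finset N, S ⊆ T → μ S ≤ μ T := by
    intro S T hST
    apply Finset.sup_le
    intro Z hZ
    exact le_trans (card_le_card (inter_subset_inter_left hST)) (hμle T Z hZ)
  have hμmem : ∀ S : Finset N, S.card = r → μ S = r → f S ≠ ⊥ := by
    intro S hScard hSμ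
    obtain ⟨Z, hZB, hZeq⟩ := hμex S
    have hZc : Z.card = r := hcard Z hZB
    have h1 : Z ∩ S = Z := by
      apply Finset.eq_of_subset_of_card_le (inter_subset_left)
      rw [← hZeq, hSμ, hZc]
    have h2 : Z ⊆ S := by rw [← h1]; exact inter_subset_right
    have h3 : Z = S := Finset.eq_of_subset_of_card_le h2 (by rw [hScard, hZc])
    rw [← h3]
    exact (hmemB Z).mp hZB
  have hμX : μ X = r := by
    have := hμle X X hXB
    rw [Finset.inter_self] at this
    exact le_antisymm (hμr X) this
  -- test vectors
  set q : Finset N → N → ℝ := fun S i => if i ∈ S then -M else M with hqdef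
  have hsum : ∀ (S Z : Finset N), Z ∈ B →
      (-(∑ i ∈ Z, q S i) : ℝ) = M * (2 * ((Z ∩ S).card : ℝ) - r) := by
    intro S Z hZ
    have h1 : ∀ i : N, q S i = M - 2 * M * (if i ∈ S then (1 : ℝ) else 0) := by
      intro i
      by_cases h : i ∈ S <;> simp [hqdef, h] <;> ring
    rw [Finset.sum_congr rfl (fun i _ => h1 i)]
    rw [Finset.sum_sub_distrib, Finset.sum_const, ← Finset.mul_sum, Finset.sum_boole]
    rw [Finset.filter_mem_eq_inter, hcard Z hZ]
    push_cast
    ring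
  have hterm : ∀ (p : N → ℝ) (Z : Finset N),
      f Z + ((-(∑ i ∈ Z, p i) : ℝ) : WithBot ℝ) ≤ (g p : WithBot ℝ) := by
    intro p Z
    rw [hg p]
    exact Finset.le_sup (f := fun W => f W + ((-(∑ i ∈ W, p i) : ℝ) : WithBot ℝ)) (mem_univ Z)
  have hbound : ∀ (p : N → ℝ) (c : ℝ),
      (∀ Z : Finset N, f Z + ((-(∑ i ∈ Z, p i) : ℝ) : WithBot ℝ) ≤ (c : WithBot ℝ)) →
      g p ≤ c := by
    intro p c h
    have : (g p : WithBot ℝ) ≤ (c : WithBot ℝ) := by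
      rw [hg p]
      exact Finset.sup_le (fun Z _ => h Z)
    exact WithBot.coe_le_coe.mp this
  have hlow : ∀ S : Finset N, Fmin + M * (2 * (μ S : ℝ) - r) ≤ g (q S) := by
    intro S
    obtain ⟨Z, hZB, hZeq⟩ := hμex S
    have h := hterm (q S) Z
    rw [hf' Z hZB, hsum S Z hZB, ← WithBot.coe_add, WithBot.coe_le_coe] at h
    have hfmin : Fmin ≤ f' Z := Finset.inf'_le f' hZB
    rw [hZeq]
    push_cast
    push_cast at h
    linarith
  have hhigh : ∀ S : Finset N, g (q S) ≤ Fmax + M * (2 * (μ S : ℝ) - r) := by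
    intro S
    apply hbound
    intro Z
    by_cases hZ : f Z = ⊥
    · simp [hZ]
    · have hZB : Z ∈ B := (hmemB Z).mpr hZ
      rw [hf' Z hZB, hsum S Z hZB, ← WithBot.coe_add, WithBot.coe_le_coe]
      have h1 : f' Z ≤ Fmax := Finset.le_sup' f' hZB
      have h2 : ((Z ∩ S).card : ℝ) ≤ (μ S : ℝ) := by exact_mod_cast hμle S Z hZB
      nlinarith [hM0.le]
  have hqsup : ∀ S T : Finset N, q S ⊔ q T = q (S ∩ T) := by
    intro S T
    funext i
    have hpi : (q S ⊔ q T) i = q S i ⊔ q T i := rfl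
    rw [hpi]
    by_cases hS : i ∈ S <;> by_cases hT : i ∈ T
    · simp only [hqdef]
      rw [if_pos hS, if_pos hT, if_pos (Finset.mem_inter.mpr ⟨hS, hT⟩), sup_idem]
    · simp only [hqdef]
      rw [if_pos hS, if_neg hT, if_neg (fun h => hT (Finset.mem_inter.mp h).2)]
      exact sup_eq_right.mpr (by linarith)
    · simp only [hqdef]
      rw [if_neg hS, if_pos hT, if_neg (fun h => hS (Finset.mem_inter.mp h).1)]
      exact sup_eq_left.mpr (by linarith)
    · simp only [hqdef]
      rw [if_neg hS, if_neg hT, if_neg (fun h => hS (Finset.mem_inter.mp h).1), sup_idem]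
  have hqinf : ∀ S T : Finset N, q S ⊓ q T = q (S ∪ T) := by
    intro S T
    funext i
    have hpi : (q S ⊓ q T) i = q S i ⊓ q T i := rfl
    rw [hpi]
    by_cases hS : i ∈ S <;> by_cases hT : i ∈ T
    · simp only [hqdef]
      rw [if_pos hS, if_pos hT, if_pos (Finset.mem_union.mpr (Or.inl hS)), inf_idem]
    · simp only [hqdef]
      rw [if_pos hS, if_neg hT, if_pos (Finset.mem_union.mpr (Or.inl hS))]
      exact inf_eq_left.mpr (by linarith)
    · simp only [hqdef]
      rw [if_neg hS, if_pos hT, if_pos (Finset.mem_union.mpr (Or.inr hT))]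
      exact inf_eq_right.mpr (by linarith)
    · simp only [hqdef]
      rw [if_neg hS, if_neg hT, if_neg (fun h => (Finset.mem_union.mp h).elim hS hT), inf_idem]
  -- μ is submodular
  have hμsub : ∀ S T : Finset N, μ (S ∩ T) + μ (S ∪ T) ≤ μ S + μ T := by
    intro S T
    by_contra hcon
    push_neg at hcon
    have hcon' : (μ S : ℝ) + (μ T : ℝ) + 1 ≤ (μ (S ∩ T) : ℝ) + (μ (S ∪ T) : ℝ) := by
      have : μ S + μ T + 1 ≤ μ (S ∩ T) + μ (S ∪ T) := hcon
      exact_mod_cast this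
    have h1 := hlow (S ∩ T)
    have h2 := hlow (S ∪ T)
    have h3 := hhigh S
    have h4 := hhigh T
    have h5 := hsub (q S) (q T)
    rw [hqsup S T, hqinf S T] at h5
    nlinarith [hM0]
  clear_value B f' Fmax Fmin M q μ
  -- endgame
  have hYXne : (Y \ X).Nonempty := by
    rw [Finset.sdiff_nonempty]
    intro hsub'
    exact hXY (Finset.eq_of_subset_of_card_le hsub' (hequi Y X hY hX).ge).symm
  obtain ⟨j, hj⟩ := hYXne
  have hjY : j ∈ Y := (Finset.mem_sdiff.mp hj).1
  have hjX : j ∉ X := (Finset.mem_sdiff.mp hj).2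
  by_contra hcon
  push_neg at hcon
  set S₀ : Finset N := Y.erase j with hS₀def
  have hYr : Y.card = r := (hequi Y X hY hX)
  have hr1 : 1 ≤ r := by
    rw [← hYr]
    exact Finset.card_pos.mpr ⟨j, hjY⟩
  have hS₀card : S₀.card = r - 1 := by
    rw [hS₀def, Finset.card_erase_of_mem hjY, hYr]
  have hμS₀ : μ S₀ = r - 1 := by
    apply le_antisymm
    · rw [← hS₀card]; exact hμcard S₀
    · have h1 : Y ∩ S₀ = S₀ := by
        apply Finset.inter_eq_right.mpr
        exact Finset.erase_subset j Y
      have := hμle S₀ Y hYB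
      rw [h1, hS₀card] at this
      exact this
  have hins : ∀ i ∈ X, μ (insert i S₀) ≤ r - 1 := by
    intro i hiX
    by_cases hiY : i ∈ Y
    · have hiS₀ : i ∈ S₀ := by
        rw [hS₀def, Finset.mem_erase]
        exact ⟨fun h => hjX (h ▸ hiX), hiY⟩
      rw [Finset.insert_eq_self.mpr hiS₀]
      exact le_of_eq hμS₀
    · have hiXY : i ∈ X \ Y := Finset.mem_sdiff.mpr ⟨hiX, hiY⟩
      have hij : i ≠ j := fun h => hjX (h ▸ hiX)
      have heq : insert i S₀ = (insert i Y).erase j := by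
        rw [hS₀def, Finset.erase_insert_of_ne hij]
      have hbot : f (insert i S₀) = ⊥ := by
        rw [heq]; exact hcon i hiXY j hj
      have hiS₀ : i ∉ S₀ := fun h => hiY (Finset.erase_subset j Y h)
      have hcard' : (insert i S₀).card = r := by
        rw [Finset.card_insert_of_notMem hiS₀, hS₀card]
        omega
      have hne : μ (insert i S₀) ≠ r := by
        intro h
        exact (hμmem _ hcard' h) hbot
      have := hμr (insert i S₀)
      omega
  have hind : ∀ T : Finset N, T ⊆ X → μ (S₀ ∪ T) ≤ r - 1 := by
    intro T
    induction T using Finset.induction_on with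
    | empty => intro _; rw [Finset.union_empty]; exact le_of_eq hμS₀
    | insert a T ha ih =>
      intro hsub'
      have haX : a ∈ X := hsub' (Finset.mem_insert_self a T)
      have hTX : T ⊆ X := fun x hx => hsub' (Finset.mem_insert_of_mem hx)
      have h1 := hμsub (S₀ ∪ T) (insert a S₀)
      have h2 : r - 1 ≤ μ ((S₀ ∪ T) ∩ insert a S₀) := by
        rw [← hμS₀]
        apply hμmono
        exact Finset.subset_inter (Finset.subset_union_left) (Finset.subset_insert a S₀)
      have h3 : (S₀ ∪ T) ∪ insert a S₀ = S₀ ∪ insert a T := by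
        rw [Finset.union_insert, Finset.union_insert,
          Finset.union_eq_left.mpr (Finset.subset_union_left)]
      rw [h3] at h1
      have h4 := ih hTX
      have h5 := hins a haX
      omega
  have hfin := hind X (Finset.Subset.refl X)
  have : μ X ≤ μ (S₀ ∪ X) := hμmono X (S₀ ∪ X) (Finset.subset_union_right)
  omega
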